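/- The patterns 321, 213, and 132 are pairwise even-Wilf-equivalent: for all n ≥ 0, eav_n(321) = eav_n(213) = eav_n(132). -/

import Mathlib

/-- A permutation `π` contains the pattern `σ` if some subsequence of `π`
(given by a strictly increasing choice of indices) is order-isomorphic to `σ`. -/
def Pattern.Contains {k n : ℕ} (σ : Equiv.Perm (Fin k)) (π : Equiv.Perm (Fin n)) : Prop :=
  ∃ f : Fin k → Fin n, StrictMono f ∧ ∀ a b : Fin k, π (f a) < π (f b) ↔ σ a < σ b

/-- `π` avoids the pattern `σ`. -/
def Pattern.Avoids {k n : ℕ} (σ : Equiv.Perm (Fin k)) (π : Equiv.Perm (Fin n)) : Prop :=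
  ¬ Pattern.Contains σ π

/-- `eav n σ`: the number of even permutations of length `n` avoiding `σ`. -/
noncomputable def eav (n : ℕ) {k : ℕ} (σ : Equiv.Perm (Fin k)) : ℕ :=
  Nat.card {π : Equiv.Perm (Fin n) // Equiv.Perm.sign π = 1 ∧ Pattern.Avoids σ π}

/-- Even-Wilf-equivalence: the same number of even avoiders of every length. -/
def EvenWilfEquiv {k l : ℕ} (σ : Equiv.Perm (Fin k)) (τ : Equiv.Perm (Fin l)) : Prop :=
  ∀ n : ℕ, eav n σ = eav n τ

/-- The pattern `321` (one-line notation, 1-indexed). -/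
def p321 : Equiv.Perm (Fin 3) :=
  ⟨![2,1,0], ![2,1,0], by decide, by decide⟩

/-- The pattern `213` (one-line notation, 1-indexed). -/
def p213 : Equiv.Perm (Fin 3) :=
  ⟨![1,0,2], ![1,0,2], by decide, by decide⟩

/-- The pattern `132` (one-line notation, 1-indexed). -/
def p132 : Equiv.Perm (Fin 3) :=
  ⟨![0,2,1], ![0,2,1], by decide, by decide⟩

open Equiv Equiv.Perm Finset

/-! ### Decidability instances -/

instance {k n : ℕ} (σ : Equiv.Perm (Fin k)) (π : Equiv.Perm (Fin n)) :
    Decidable (Pattern.Contains σ π) := by unfold Pattern.Contains; infer_instance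

instance {k n : ℕ} (σ : Equiv.Perm (Fin k)) (π : Equiv.Perm (Fin n)) :
    Decidable (Pattern.Avoids σ π) := by unfold Pattern.Avoids; infer_instance

/-- The values `≥ t` of `π` appear in increasing order. -/
def IncAbove {n : ℕ} (π : Equiv.Perm (Fin n)) (t : ℕ) : Prop :=
  ∀ i j : Fin n, i < j → t ≤ (π i : ℕ) → t ≤ (π j : ℕ) → (π i : ℕ) < (π j : ℕ)

/-- The values `< t` of `π` appear in increasing order. -/
def IncBelow {n : ℕ} (π : Equiv.Perm (Fin n)) (t : ℕ) : Prop :=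
  ∀ i j : Fin n, i < j → (π i : ℕ) < t → (π j : ℕ) < t → (π i : ℕ) < (π j : ℕ)

instance {n : ℕ} (π : Equiv.Perm (Fin n)) (t : ℕ) : Decidable (IncAbove π t) := by
  unfold IncAbove; infer_instance

instance {n : ℕ} (π : Equiv.Perm (Fin n)) (t : ℕ) : Decidable (IncBelow π t) := by
  unfold IncBelow; infer_instance

lemma incAbove_mono {n : ℕ} {π : Equiv.Perm (Fin n)} {s t : ℕ} (h : s ≤ t)
    (H : IncAbove π s) : IncAbove π t :=
  fun i j hij hi hj => H i j hij (h.trans hi) (h.trans hj)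

lemma incBelow_mono {n : ℕ} {π : Equiv.Perm (Fin n)} {s t : ℕ} (h : s ≤ t)
    (H : IncBelow π t) : IncBelow π s :=
  fun i j hij hi hj => H i j hij (hi.trans_le h) (hj.trans_le h)

lemma incAbove_trivial {n : ℕ} (π : Equiv.Perm (Fin n)) {t : ℕ} (h : n ≤ t) :
    IncAbove π t := by
  intro i j _ hi _
  have := (π i).isLt; omega

lemma incBelow_zero {n : ℕ} (π : Equiv.Perm (Fin n)) : IncBelow π 0 := by
  intro i j _ hi _; omega

/-! ### Characterization of containment of the length-3 patterns -/

lemma contains132_iff {n : ℕ} (π : Equiv.Perm (Fin n)) :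
    Pattern.Contains p132 π ↔
      ∃ i j k : Fin n, i < j ∧ j < k ∧ π i < π k ∧ π k < π j := by
  constructor
  · rintro ⟨f, hf, hiff⟩
    exact ⟨f 0, f 1, f 2, hf (by decide), hf (by decide),
      (hiff 0 2).2 (by decide), (hiff 2 1).2 (by decide)⟩
  · rintro ⟨i, j, k, hij, hjk, h1, h2⟩
    refine ⟨![i, j, k], ?_, ?_⟩
    · intro a b hab
      fin_cases a <;> fin_cases b <;>
        simp only [Matrix.cons_val_zero, Matrix.cons_val_one, Matrix.head_cons,
          Matrix.cons_val_two, Matrix.tail_cons, Fin.mk_lt_mk] <;>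
        first
          | exact absurd hab (by decide)
          | exact hij
          | exact hjk
          | exact hij.trans hjk
    · intro a b
      fin_cases a <;> fin_cases b <;>
        simp only [Matrix.cons_val_zero, Matrix.cons_val_one, Matrix.head_cons,
          Matrix.cons_val_two, Matrix.tail_cons] <;>
        first
          | exact iff_of_true (h1.trans h2) (by decide)
          | exact iff_of_true h1 (by decide)
          | exact iff_of_true h2 (by decide)
          | exact iff_of_false (lt_irrefl _) (by decide)
          | exact iff_of_false (fun hh => absurd ((h1.trans h2).trans hh) (lt_irrefl _)) (by decide)
          | exact iff_of_false (fun hh => absurd (h1.trans hh) (lt_irrefl _)) (by decide)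
          | exact iff_of_false (fun hh => absurd (h2.trans hh) (lt_irrefl _)) (by decide)

lemma contains321_iff {n : ℕ} (π : Equiv.Perm (Fin n)) :
    Pattern.Contains p321 π ↔
      ∃ i j k : Fin n, i < j ∧ j < k ∧ π j < π i ∧ π k < π j := by
  constructor
  · rintro ⟨f, hf, hiff⟩
    exact ⟨f 0, f 1, f 2, hf (by decide), hf (by decide),
      (hiff 1 0).2 (by decide), (hiff 2 1).2 (by decide)⟩
  · rintro ⟨i, j, k, hij, hjk, h1, h2⟩
    refine ⟨![i, j, k], ?_, ?_⟩
    · intro a b hab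
      fin_cases a <;> fin_cases b <;>
        simp only [Matrix.cons_val_zero, Matrix.cons_val_one, Matrix.head_cons,
          Matrix.cons_val_two, Matrix.tail_cons, Fin.mk_lt_mk] <;>
        first
          | exact absurd hab (by decide)
          | exact hij
          | exact hjk
          | exact hij.trans hjk
    · intro a b
      fin_cases a <;> fin_cases b <;>
        simp only [Matrix.cons_val_zero, Matrix.cons_val_one, Matrix.head_cons,
          Matrix.cons_val_two, Matrix.tail_cons] <;>
        first
          | exact iff_of_true (h2.trans h1) (by decide)
          | exact iff_of_true h1 (by decide)
          | exact iff_of_true h2 (by decide)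
          | exact iff_of_false (lt_irrefl _) (by decide)
          | exact iff_of_false (fun hh => absurd ((h2.trans h1).trans hh) (lt_irrefl _)) (by decide)
          | exact iff_of_false (fun hh => absurd (h1.trans hh) (lt_irrefl _)) (by decide)
          | exact iff_of_false (fun hh => absurd (h2.trans hh) (lt_irrefl _)) (by decide)
/-! ### Insertion of a first value into a permutation -/

/-- The permutation of `Fin (n+1)` with first value `a` whose remaining values have the
pattern of `σ`. -/
def ins {n : ℕ} (a : Fin (n + 1)) (σ : Equiv.Perm (Fin n)) : Equiv.Perm (Fin (n + 1)) :=
  (a.cycleRange)⁻¹ * Equiv.Perm.decomposeFin.symm (0, σ)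

@[simp] lemma ins_zero {n : ℕ} (a : Fin (n + 1)) (σ : Equiv.Perm (Fin n)) :
    ins a σ 0 = a := by
  simp [ins, Equiv.Perm.mul_apply, Equiv.Perm.inv_def]

@[simp] lemma ins_succ {n : ℕ} (a : Fin (n + 1)) (σ : Equiv.Perm (Fin n)) (i : Fin n) :
    ins a σ i.succ = a.succAbove (σ i) := by
  simp [ins, Equiv.Perm.mul_apply, Equiv.Perm.inv_def]

@[simp] lemma sign_ins {n : ℕ} (a : Fin (n + 1)) (σ : Equiv.Perm (Fin n)) :
    Equiv.Perm.sign (ins a σ) = (-1) ^ (a : ℕ) * Equiv.Perm.sign σ := by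
  simp [ins]

/-- Decomposing a permutation of `Fin (n+1)` into its first value and the pattern of the rest. -/
def insEquiv (n : ℕ) : Fin (n + 1) × Equiv.Perm (Fin n) ≃ Equiv.Perm (Fin (n + 1)) where
  toFun p := ins p.1 p.2
  invFun π := (π 0, (Equiv.Perm.decomposeFin ((π 0).cycleRange * π)).2)
  left_inv := by
    rintro ⟨a, σ⟩
    show (ins a σ 0, (Equiv.Perm.decomposeFin ((ins a σ 0).cycleRange * ins a σ)).2) = (a, σ)
    rw [ins_zero]
    have h1 : (a.cycleRange) * ins a σ = Equiv.Perm.decomposeFin.symm (0, σ) := by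
      rw [ins, ← mul_assoc, mul_inv_cancel, one_mul]
    rw [h1, Equiv.apply_symm_apply]
  right_inv := by
    intro π
    show ins (π 0) (Equiv.Perm.decomposeFin ((π 0).cycleRange * π)).2 = π
    have hsy : Equiv.Perm.decomposeFin.symm (Equiv.Perm.decomposeFin ((π 0).cycleRange * π))
        = (π 0).cycleRange * π := Equiv.symm_apply_apply _ _
    have hq1 : (Equiv.Perm.decomposeFin ((π 0).cycleRange * π)).1 = 0 := by
      have h2 : (Equiv.Perm.decomposeFin.symm (Equiv.Perm.decomposeFin ((π 0).cycleRange * π))) 0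
          = (Equiv.Perm.decomposeFin ((π 0).cycleRange * π)).1 :=
        Equiv.Perm.decomposeFin_symm_apply_zero _ _
      rw [hsy] at h2
      simpa [Equiv.Perm.mul_apply, Fin.cycleRange_self] using h2.symm
    have hpair : ((0 : Fin (n+1)), (Equiv.Perm.decomposeFin ((π 0).cycleRange * π)).2)
        = Equiv.Perm.decomposeFin ((π 0).cycleRange * π) := Prod.ext hq1.symm rfl
    rw [ins, hpair, hsy, ← mul_assoc, inv_mul_cancel, one_mul]
/-! ### Value computations for succAbove -/

lemma val_succAbove {n : ℕ} (a : Fin (n + 1)) (v : Fin n) :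
    ((a.succAbove v) : ℕ) = if (v : ℕ) < (a : ℕ) then (v : ℕ) else (v : ℕ) + 1 := by
  rcases lt_or_ge (v.castSucc) a with h | h
  · rw [Fin.succAbove_of_castSucc_lt _ _ h, if_pos (by simpa [Fin.lt_def] using h)]
    simp
  · rw [Fin.succAbove_of_le_castSucc _ _ h,
      if_neg (by simp only [Fin.le_def, Fin.coe_castSucc] at h; omega)]
    simp

/-! ### Transfer of avoidance through `ins` : the 132 case -/

lemma avoids132_ins_iff {n : ℕ} (a : Fin (n + 1)) (σ : Equiv.Perm (Fin n)) (t : ℕ) :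
    (Pattern.Avoids p132 (ins a σ) ∧ IncAbove (ins a σ) t) ↔
      ((a : ℕ) ≤ t ∧ Pattern.Avoids p132 σ ∧ IncAbove σ (a : ℕ)) := by
  have hs : ∀ v : Fin n, ((a.succAbove v) : ℕ)
      = if (v : ℕ) < (a : ℕ) then (v : ℕ) else (v : ℕ) + 1 := val_succAbove a
  constructor
  · rintro ⟨hav, hinc⟩
    have hA : (a : ℕ) ≤ t := by
      by_contra hcon
      push_neg at hcon
      have htn : t < n := by have := a.isLt; omega
      have hkey := hinc 0 (σ.symm ⟨t, htn⟩).succ (Fin.succ_pos _)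
      rw [ins_zero, ins_succ, Equiv.apply_symm_apply] at hkey
      have hval : ((a.succAbove ⟨t, htn⟩) : ℕ) = t := by
        rw [hs]; simp only [Fin.val_mk]; rw [if_pos hcon]
      rw [hval] at hkey
      have := hkey hcon.le (le_refl t)
      omega
    refine ⟨hA, ?_, ?_⟩
    · intro hc
      apply hav
      rw [contains132_iff] at hc ⊢
      obtain ⟨i, j, k, hij, hjk, h1, h2⟩ := hc
      refine ⟨i.succ, j.succ, k.succ, Fin.succ_lt_succ_iff.2 hij, Fin.succ_lt_succ_iff.2 hjk,
        ?_, ?_⟩ <;>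
      · simp only [Fin.lt_def, ins_succ, hs] at *
        split_ifs <;> omega
    · intro i j hij hi hj
      by_contra hcon
      push_neg at hcon
      have hne : (σ i : ℕ) ≠ (σ j : ℕ) := by
        intro h
        exact absurd (σ.injective (Fin.val_injective h)) (ne_of_lt hij)
      apply hav
      rw [contains132_iff]
      refine ⟨0, i.succ, j.succ, Fin.succ_pos _, Fin.succ_lt_succ_iff.2 hij, ?_, ?_⟩ <;>
      · simp only [Fin.lt_def, ins_zero, ins_succ, hs]
        split_ifs <;> omega
  · rintro ⟨hat, hav, hinc⟩
    constructor
    · rw [Pattern.Avoids, contains132_iff]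
      rintro ⟨i, j, k, hij, hjk, h1, h2⟩
      rcases Fin.eq_zero_or_eq_succ j with rfl | ⟨j', rfl⟩
      · exact absurd hij (Fin.not_lt_zero _).elim
      rcases Fin.eq_zero_or_eq_succ k with rfl | ⟨k', rfl⟩
      · exact absurd hjk (by simp [Fin.lt_def])
      rcases Fin.eq_zero_or_eq_succ i with rfl | ⟨i', rfl⟩
      · -- pattern starting at position 0
        simp only [Fin.lt_def, ins_zero, ins_succ, hs] at h1 h2
        have hjk' : (j' : Fin n) < k' := by rwa [Fin.succ_lt_succ_iff] at hjk
        have hk' : (a : ℕ) ≤ (σ k' : ℕ) := by split_ifs at h1 <;> omega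
        have hj' : (a : ℕ) ≤ (σ j' : ℕ) := by split_ifs at h2 <;> omega
        have := hinc j' k' hjk' hj' hk'
        split_ifs at h2 <;> omega
      · apply hav
        rw [contains132_iff]
        rw [Fin.succ_lt_succ_iff] at hij hjk
        simp only [Fin.lt_def, ins_succ, hs] at h1 h2
        refine ⟨i', j', k', hij, hjk, ?_, ?_⟩ <;> rw [Fin.lt_def] <;>
          split_ifs at h1 h2 <;> omega
    · intro p q hpq hp hq
      rcases Fin.eq_zero_or_eq_succ q with rfl | ⟨j', rfl⟩
      · exact absurd hpq (Fin.not_lt_zero _).elim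
      rcases Fin.eq_zero_or_eq_succ p with rfl | ⟨i', rfl⟩
      · simp only [ins_zero, ins_succ, hs] at hp hq ⊢
        have : (a : ℕ) = t := le_antisymm hat hp
        split_ifs at hq ⊢ <;> omega
      · simp only [ins_succ, hs] at hp hq ⊢
        have hij : (i' : Fin n) < j' := by rwa [Fin.succ_lt_succ_iff] at hpq
        have hi' : (a : ℕ) ≤ (σ i' : ℕ) := by split_ifs at hp <;> omega
        have hj' : (a : ℕ) ≤ (σ j' : ℕ) := by split_ifs at hq <;> omega
        have := hinc i' j' hij hi' hj'
        split_ifs <;> omega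
/-! ### Transfer of avoidance through `ins` : the 321 case -/

lemma avoids321_ins_iff {n : ℕ} (a : Fin (n + 1)) (σ : Equiv.Perm (Fin n)) (t : ℕ) :
    (Pattern.Avoids p321 (ins a σ) ∧ IncBelow (ins a σ) t) ↔
      (Pattern.Avoids p321 σ ∧
        ((t ≤ (a : ℕ) ∧ IncBelow σ (a : ℕ)) ∨
          ((a : ℕ) = 0 ∧ 1 ≤ t ∧ IncBelow σ (t - 1)))) := by
  have hs : ∀ v : Fin n, ((a.succAbove v) : ℕ)
      = if (v : ℕ) < (a : ℕ) then (v : ℕ) else (v : ℕ) + 1 := val_succAbove a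
  constructor
  · rintro ⟨hav, hinc⟩
    have havσ : Pattern.Avoids p321 σ := by
      intro hc
      apply hav
      rw [contains321_iff] at hc ⊢
      obtain ⟨i, j, k, hij, hjk, h1, h2⟩ := hc
      refine ⟨i.succ, j.succ, k.succ, Fin.succ_lt_succ_iff.2 hij, Fin.succ_lt_succ_iff.2 hjk,
        ?_, ?_⟩ <;>
      · simp only [Fin.lt_def, ins_succ, hs] at *
        split_ifs <;> omega
    have hbelA : IncBelow σ (a : ℕ) := by
      intro i j hij hi hj
      by_contra hcon
      push_neg at hcon
      have hne : (σ i : ℕ) ≠ (σ j : ℕ) := by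
        intro h
        exact absurd (σ.injective (Fin.val_injective h)) (ne_of_lt hij)
      apply hav
      rw [contains321_iff]
      refine ⟨0, i.succ, j.succ, Fin.succ_pos _, Fin.succ_lt_succ_iff.2 hij, ?_, ?_⟩ <;>
      · simp only [Fin.lt_def, ins_zero, ins_succ, hs]
        split_ifs <;> omega
    refine ⟨havσ, ?_⟩
    rcases le_or_gt t (a : ℕ) with hta | hta
    · exact Or.inl ⟨hta, hbelA⟩
    · have hA0 : (a : ℕ) = 0 := by
        by_contra hcon
        have hn : 0 < n := by have := a.isLt; omega
        have hkey := hinc 0 (σ.symm ⟨0, hn⟩).succ (Fin.succ_pos _)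
        rw [ins_zero, ins_succ, Equiv.apply_symm_apply] at hkey
        have hval : ((a.succAbove ⟨0, hn⟩) : ℕ) = 0 := by
          rw [hs]; simp only [Fin.val_mk]; rw [if_pos (by omega)]
        rw [hval] at hkey
        have := hkey hta (by omega)
        omega
      refine Or.inr ⟨hA0, by omega, ?_⟩
      intro i j hij hi hj
      have hkey := hinc i.succ j.succ (Fin.succ_lt_succ_iff.2 hij)
      simp only [ins_succ, hs, hA0] at hkey
      rw [if_neg (by omega), if_neg (by omega)] at hkey
      have := hkey (by omega) (by omega)
      omega
  · rintro ⟨hav, hdis⟩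
    constructor
    · rw [Pattern.Avoids, contains321_iff]
      rintro ⟨i, j, k, hij, hjk, h1, h2⟩
      rcases Fin.eq_zero_or_eq_succ j with rfl | ⟨j', rfl⟩
      · exact absurd hij (Fin.not_lt_zero _).elim
      rcases Fin.eq_zero_or_eq_succ k with rfl | ⟨k', rfl⟩
      · exact absurd hjk (by simp [Fin.lt_def])
      rcases Fin.eq_zero_or_eq_succ i with rfl | ⟨i', rfl⟩
      · simp only [Fin.lt_def, ins_zero, ins_succ, hs] at h1 h2
        have hjk' : (j' : Fin n) < k' := by rwa [Fin.succ_lt_succ_iff] at hjk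
        rcases hdis with ⟨hta, hbel⟩ | ⟨hA0, ht1, hbel⟩
        · have hj' : (σ j' : ℕ) < (a : ℕ) := by split_ifs at h1 <;> omega
          have hk' : (σ k' : ℕ) < (a : ℕ) := by split_ifs at h2 <;> omega
          have := hbel j' k' hjk' hj' hk'
          split_ifs at h2 <;> omega
        · rw [hA0] at h1
          split_ifs at h1 <;> omega
      · apply hav
        rw [contains321_iff]
        rw [Fin.succ_lt_succ_iff] at hij hjk
        simp only [Fin.lt_def, ins_succ, hs] at h1 h2
        refine ⟨i', j', k', hij, hjk, ?_, ?_⟩ <;> rw [Fin.lt_def] <;>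
          split_ifs at h1 h2 <;> omega
    · intro p q hpq hp hq
      rcases Fin.eq_zero_or_eq_succ q with rfl | ⟨j', rfl⟩
      · exact absurd hpq (Fin.not_lt_zero _).elim
      rcases hdis with ⟨hta, hbel⟩ | ⟨hA0, ht1, hbel⟩
      · rcases Fin.eq_zero_or_eq_succ p with rfl | ⟨i', rfl⟩
        · rw [ins_zero] at hp
          omega
        · simp only [ins_succ, hs] at hp hq ⊢
          have hij : (i' : Fin n) < j' := by rwa [Fin.succ_lt_succ_iff] at hpq
          have hi' : (σ i' : ℕ) < (a : ℕ) := by split_ifs at hp <;> omega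
          have hj' : (σ j' : ℕ) < (a : ℕ) := by split_ifs at hq <;> omega
          have := hbel i' j' hij hi' hj'
          split_ifs <;> omega
      · rcases Fin.eq_zero_or_eq_succ p with rfl | ⟨i', rfl⟩
        · simp only [ins_zero, ins_succ, hs, hA0, Nat.not_lt_zero, if_false] at hp hq ⊢
          omega
        · simp only [ins_succ, hs, hA0, Nat.not_lt_zero, if_false] at hp hq ⊢
          have hij : (i' : Fin n) < j' := by rwa [Fin.succ_lt_succ_iff] at hpq
          have := hbel i' j' hij (by omega) (by omega)
          omega
/-! ### Refined counting functions -/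

noncomputable def cA (n t : ℕ) (u : ℤˣ) : ℕ :=
  Nat.card {σ : Equiv.Perm (Fin n) //
    Equiv.Perm.sign σ = u ∧ Pattern.Avoids p132 σ ∧ IncAbove σ t}

noncomputable def cB (n t : ℕ) (u : ℤˣ) : ℕ :=
  Nat.card {σ : Equiv.Perm (Fin n) //
    Equiv.Perm.sign σ = u ∧ Pattern.Avoids p321 σ ∧ IncBelow σ t}

lemma sign_ins_iff {n : ℕ} (a : Fin (n + 1)) (σ : Equiv.Perm (Fin n)) (u : ℤˣ) :
    Equiv.Perm.sign (ins a σ) = u ↔ Equiv.Perm.sign σ = (-1) ^ (a : ℕ) * u := by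
  have hsq : ((-1 : ℤˣ) ^ (a : ℕ)) * ((-1 : ℤˣ) ^ (a : ℕ)) = 1 := by
    rw [← pow_add]
    exact Even.neg_one_pow ⟨(a : ℕ), rfl⟩
  rw [sign_ins]
  constructor
  · intro h
    rw [← h, ← mul_assoc, hsq, one_mul]
  · intro h
    rw [h, ← mul_assoc, hsq, one_mul]

lemma fiberA {n : ℕ} (a : Fin (n + 1)) (t : ℕ) (u : ℤˣ) :
    Nat.card {σ : Equiv.Perm (Fin n) //
        Equiv.Perm.sign (ins a σ) = u ∧ Pattern.Avoids p132 (ins a σ) ∧ IncAbove (ins a σ) t}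
      = if (a : ℕ) ≤ t then cA n (a : ℕ) ((-1) ^ (a : ℕ) * u) else 0 := by
  by_cases h : (a : ℕ) ≤ t
  · rw [if_pos h]
    apply Nat.card_congr
    apply Equiv.subtypeEquivRight
    intro σ
    constructor
    · rintro ⟨h1, h2, h3⟩
      obtain ⟨_, h4, h5⟩ := (avoids132_ins_iff a σ t).1 ⟨h2, h3⟩
      exact ⟨(sign_ins_iff a σ u).1 h1, h4, h5⟩
    · rintro ⟨h1, h2, h3⟩
      obtain ⟨h4, h5⟩ := (avoids132_ins_iff a σ t).2 ⟨h, h2, h3⟩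
      exact ⟨(sign_ins_iff a σ u).2 h1, h4, h5⟩
  · rw [if_neg h]
    haveI : IsEmpty {σ : Equiv.Perm (Fin n) //
        Equiv.Perm.sign (ins a σ) = u ∧ Pattern.Avoids p132 (ins a σ) ∧ IncAbove (ins a σ) t} :=
      ⟨fun ⟨σ, _, h2, h3⟩ => h ((avoids132_ins_iff a σ t).1 ⟨h2, h3⟩).1⟩
    exact Nat.card_of_isEmpty

lemma fiberB {n : ℕ} (a : Fin (n + 1)) (t : ℕ) (u : ℤˣ) :
    Nat.card {σ : Equiv.Perm (Fin n) //
        Equiv.Perm.sign (ins a σ) = u ∧ Pattern.Avoids p321 (ins a σ) ∧ IncBelow (ins a σ) t}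
      = (if t ≤ (a : ℕ) then cB n (a : ℕ) ((-1) ^ (a : ℕ) * u) else 0)
        + (if (a : ℕ) = 0 ∧ 1 ≤ t then cB n (t - 1) u else 0) := by
  rcases le_or_gt t (a : ℕ) with h | h
  · rw [if_pos h, if_neg (by rintro ⟨h0, h1⟩; omega)]
    simp only [add_zero]
    apply Nat.card_congr
    apply Equiv.subtypeEquivRight
    intro σ
    constructor
    · rintro ⟨h1, h2, h3⟩
      obtain ⟨h4, h5⟩ := (avoids321_ins_iff a σ t).1 ⟨h2, h3⟩
      rcases h5 with ⟨_, h6⟩ | ⟨h0, h7, _⟩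
      · exact ⟨(sign_ins_iff a σ u).1 h1, h4, h6⟩
      · omega
    · rintro ⟨h1, h2, h3⟩
      obtain ⟨h4, h5⟩ := (avoids321_ins_iff a σ t).2 ⟨h2, Or.inl ⟨h, h3⟩⟩
      exact ⟨(sign_ins_iff a σ u).2 h1, h4, h5⟩
  · rw [if_neg (by omega)]
    by_cases h0 : (a : ℕ) = 0
    · rw [if_pos ⟨h0, by omega⟩]
      simp only [zero_add]
      apply Nat.card_congr
      apply Equiv.subtypeEquivRight
      intro σ
      have hu : ((-1 : ℤˣ) ^ (a : ℕ) * u) = u := by rw [h0, pow_zero, one_mul]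
      constructor
      · rintro ⟨h1, h2, h3⟩
        obtain ⟨h4, h5⟩ := (avoids321_ins_iff a σ t).1 ⟨h2, h3⟩
        rcases h5 with ⟨h6, _⟩ | ⟨_, _, h7⟩
        · omega
        · refine ⟨?_, h4, h7⟩
          rw [← hu]
          exact (sign_ins_iff a σ u).1 h1
      · rintro ⟨h1, h2, h3⟩
        obtain ⟨h4, h5⟩ := (avoids321_ins_iff a σ t).2 ⟨h2, Or.inr ⟨h0, by omega, h3⟩⟩
        exact ⟨(sign_ins_iff a σ u).2 (by rw [hu]; exact h1), h4, h5⟩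
    · rw [if_neg (by rintro ⟨h1, _⟩; exact h0 h1)]
      simp only [add_zero]
      haveI : IsEmpty {σ : Equiv.Perm (Fin n) //
          Equiv.Perm.sign (ins a σ) = u ∧ Pattern.Avoids p321 (ins a σ) ∧ IncBelow (ins a σ) t} := by
        refine ⟨fun ⟨σ, _, h2, h3⟩ => ?_⟩
        obtain ⟨_, h5⟩ := (avoids321_ins_iff a σ t).1 ⟨h2, h3⟩
        rcases h5 with ⟨h6, _⟩ | ⟨h6, _, _⟩
        · omega
        · exact h0 h6
      exact Nat.card_of_isEmpty

lemma stepA (n t : ℕ) (u : ℤˣ) :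
    cA (n + 1) t u
      = ∑ a ∈ range (n + 1), if a ≤ t then cA n a ((-1) ^ a * u) else 0 := by
  have h1 : cA (n + 1) t u = Nat.card
      {p : Fin (n + 1) × Equiv.Perm (Fin n) //
        Equiv.Perm.sign (ins p.1 p.2) = u ∧ Pattern.Avoids p132 (ins p.1 p.2)
          ∧ IncAbove (ins p.1 p.2) t} :=
    Nat.card_congr (((insEquiv n).subtypeEquiv (fun p => Iff.rfl)).symm)
  rw [h1, Nat.card_congr (Equiv.subtypeProdEquivSigmaSubtype
    (fun (a : Fin (n + 1)) (σ : Equiv.Perm (Fin n)) =>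
      Equiv.Perm.sign (ins a σ) = u ∧ Pattern.Avoids p132 (ins a σ) ∧ IncAbove (ins a σ) t)),
    Nat.card_eq_fintype_card, Fintype.card_sigma]
  rw [Finset.sum_congr rfl (fun (a : Fin (n + 1)) _ => by
    rw [← Nat.card_eq_fintype_card, fiberA a t u])]
  exact Fin.sum_univ_eq_sum_range (fun m => if m ≤ t then cA n m ((-1) ^ m * u) else 0) (n + 1)

lemma stepB (n t : ℕ) (u : ℤˣ) :
    cB (n + 1) t u
      = ∑ a ∈ range (n + 1), ((if t ≤ a then cB n a ((-1) ^ a * u) else 0)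
          + (if a = 0 ∧ 1 ≤ t then cB n (t - 1) u else 0)) := by
  have h1 : cB (n + 1) t u = Nat.card
      {p : Fin (n + 1) × Equiv.Perm (Fin n) //
        Equiv.Perm.sign (ins p.1 p.2) = u ∧ Pattern.Avoids p321 (ins p.1 p.2)
          ∧ IncBelow (ins p.1 p.2) t} :=
    Nat.card_congr (((insEquiv n).subtypeEquiv (fun p => Iff.rfl)).symm)
  rw [h1, Nat.card_congr (Equiv.subtypeProdEquivSigmaSubtype
    (fun (a : Fin (n + 1)) (σ : Equiv.Perm (Fin n)) =>
      Equiv.Perm.sign (ins a σ) = u ∧ Pattern.Avoids p321 (ins a σ) ∧ IncBelow (ins a σ) t)),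
    Nat.card_eq_fintype_card, Fintype.card_sigma]
  rw [Finset.sum_congr rfl (fun (a : Fin (n + 1)) _ => by
    rw [← Nat.card_eq_fintype_card, fiberB a t u])]
  exact Fin.sum_univ_eq_sum_range
    (fun m => (if t ≤ m then cB n m ((-1) ^ m * u) else 0)
      + (if m = 0 ∧ 1 ≤ t then cB n (t - 1) u else 0)) (n + 1)
/-! ### Signed and total counts, over ℤ -/

noncomputable def dA (n t : ℕ) : ℤ := (cA n t 1 : ℤ) - (cA n t (-1) : ℤ)
noncomputable def sA (n t : ℕ) : ℤ := (cA n t 1 : ℤ) + (cA n t (-1) : ℤ)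
noncomputable def dB (n t : ℕ) : ℤ := (cB n t 1 : ℤ) - (cB n t (-1) : ℤ)
noncomputable def sB (n t : ℕ) : ℤ := (cB n t 1 : ℤ) + (cB n t (-1) : ℤ)

noncomputable def Ssum (n m : ℕ) : ℤ := ∑ a ∈ range (m + 1), (-1 : ℤ) ^ a * dA n a
noncomputable def Tsum (n m : ℕ) : ℤ := ∑ a ∈ range (m + 1), sA n a

lemma units_pow_cases (a : ℕ) : ((-1 : ℤˣ) ^ a = 1 ∧ (-1 : ℤ) ^ a = 1)
    ∨ ((-1 : ℤˣ) ^ a = -1 ∧ (-1 : ℤ) ^ a = -1) := by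
  rcases Nat.even_or_odd a with h | h
  · exact Or.inl ⟨h.neg_one_pow, h.neg_one_pow⟩
  · exact Or.inr ⟨h.neg_one_pow, h.neg_one_pow⟩

lemma dA_step (n t : ℕ) :
    dA (n + 1) t = ∑ a ∈ range (n + 1), (if a ≤ t then (-1 : ℤ) ^ a * dA n a else 0) := by
  unfold dA
  rw [stepA n t 1, stepA n t (-1)]
  push_cast
  rw [← Finset.sum_sub_distrib]
  refine Finset.sum_congr rfl (fun a _ => ?_)
  rcases units_pow_cases a with ⟨h1, h2⟩ | ⟨h1, h2⟩ <;>
    rw [h1, h2] <;>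
    simp only [one_mul, mul_one, neg_one_mul, neg_neg, neg_mul] <;>
    split_ifs <;> ring

lemma sA_step (n t : ℕ) :
    sA (n + 1) t = ∑ a ∈ range (n + 1), (if a ≤ t then sA n a else 0) := by
  unfold sA
  rw [stepA n t 1, stepA n t (-1)]
  push_cast
  rw [← Finset.sum_add_distrib]
  refine Finset.sum_congr rfl (fun a _ => ?_)
  rcases units_pow_cases a with ⟨h1, _⟩ | ⟨h1, _⟩ <;>
    rw [h1] <;>
    simp only [one_mul, mul_one, neg_one_mul, neg_neg, neg_mul] <;>
    split_ifs <;> ring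

lemma sum_single_zero {M : Type*} [AddCommMonoid M] (n : ℕ) (c : M) (p : Prop) [Decidable p] :
    ∑ a ∈ range (n + 1), (if a = 0 ∧ p then c else 0) = if p then c else 0 := by
  rw [Finset.sum_eq_single_of_mem 0 (Finset.mem_range.2 (by omega))]
  · by_cases hp : p
    · rw [if_pos ⟨rfl, hp⟩, if_pos hp]
    · rw [if_neg (by tauto), if_neg hp]
  · intro b _ hb
    rw [if_neg (by tauto)]

lemma dB_step (n t : ℕ) :
    dB (n + 1) t = (∑ a ∈ range (n + 1), (if t ≤ a then (-1 : ℤ) ^ a * dB n a else 0))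
      + (if 1 ≤ t then dB n (t - 1) else 0) := by
  unfold dB
  rw [stepB n t 1, stepB n t (-1)]
  push_cast
  rw [Finset.sum_add_distrib, Finset.sum_add_distrib]
  rw [sum_single_zero n ((cB n (t - 1) 1 : ℤ)) (1 ≤ t),
    sum_single_zero n ((cB n (t - 1) (-1) : ℤ)) (1 ≤ t)]
  rw [show ∀ x y z w : ℤ, x + y - (z + w) = (x - z) + (y - w) from fun x y z w => by ring]
  congr 1
  · rw [← Finset.sum_sub_distrib]
    refine Finset.sum_congr rfl (fun a _ => ?_)
    rcases units_pow_cases a with ⟨h1, h2⟩ | ⟨h1, h2⟩ <;>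
      rw [h1, h2] <;>
      simp only [one_mul, mul_one, neg_one_mul, neg_neg, neg_mul] <;>
      split_ifs <;> ring
  · split_ifs <;> ring

lemma sB_step (n t : ℕ) :
    sB (n + 1) t = (∑ a ∈ range (n + 1), (if t ≤ a then sB n a else 0))
      + (if 1 ≤ t then sB n (t - 1) else 0) := by
  unfold sB
  rw [stepB n t 1, stepB n t (-1)]
  push_cast
  rw [Finset.sum_add_distrib, Finset.sum_add_distrib]
  rw [sum_single_zero n ((cB n (t - 1) 1 : ℤ)) (1 ≤ t),
    sum_single_zero n ((cB n (t - 1) (-1) : ℤ)) (1 ≤ t)]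
  rw [show ∀ x y z w : ℤ, x + y + (z + w) = (x + z) + (y + w) from fun x y z w => by ring]
  congr 1
  · rw [← Finset.sum_add_distrib]
    refine Finset.sum_congr rfl (fun a _ => ?_)
    rcases units_pow_cases a with ⟨h1, _⟩ | ⟨h1, _⟩ <;>
      rw [h1] <;>
      simp only [one_mul, mul_one, neg_one_mul, neg_neg, neg_mul] <;>
      split_ifs <;> ring
  · split_ifs <;> ring
/-! ### Summation helpers -/

lemma sum_if_le (f : ℕ → ℤ) (n t : ℕ) :
    ∑ a ∈ range (n + 1), (if a ≤ t then f a else 0) = ∑ a ∈ range (min t n + 1), f a := by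
  rw [← Finset.sum_filter]
  refine Finset.sum_congr ?_ (fun _ _ => rfl)
  ext a
  simp only [Finset.mem_filter, Finset.mem_range]
  omega

lemma dA_step' (n t : ℕ) : dA (n + 1) t = Ssum n (min t n) := by
  rw [dA_step, sum_if_le]; rfl

lemma sA_step' (n t : ℕ) : sA (n + 1) t = Tsum n (min t n) := by
  rw [sA_step, sum_if_le]; rfl

lemma Ssum_succ (n m : ℕ) : Ssum n (m + 1) = Ssum n m + (-1 : ℤ) ^ (m + 1) * dA n (m + 1) :=
  Finset.sum_range_succ _ _

lemma Tsum_succ (n m : ℕ) : Tsum n (m + 1) = Tsum n m + sA n (m + 1) :=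
  Finset.sum_range_succ _ _

lemma Ssum_zero (n : ℕ) : Ssum n 0 = dA n 0 := by
  unfold Ssum; rw [Finset.sum_range_one]; simp

lemma Tsum_zero (n : ℕ) : Tsum n 0 = sA n 0 := by
  unfold Tsum; rw [Finset.sum_range_one]

lemma neg_one_pow_sub {b n : ℕ} (h : b ≤ n) :
    (-1 : ℤ) ^ (n - b) = (-1) ^ n * (-1) ^ b := by
  have h1 : (-1 : ℤ) ^ (n - b) * (-1) ^ b = (-1) ^ n := by
    rw [← pow_add]; congr 1; omega
  have h2 : (-1 : ℤ) ^ b * (-1) ^ b = 1 := by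
    rw [← pow_add]; exact Even.neg_one_pow ⟨b, rfl⟩
  calc (-1 : ℤ) ^ (n - b) = (-1) ^ (n - b) * ((-1) ^ b * (-1) ^ b) := by rw [h2, mul_one]
    _ = (-1) ^ n * (-1) ^ b := by rw [← mul_assoc, h1]

/-- Reflecting the tail sum in the `B` recursion. -/
lemma reflect_sum (n t : ℕ) (f : ℕ → ℤ) :
    ∑ a ∈ range (n + 1), (if t ≤ a then (-1 : ℤ) ^ a * f (n - a) else 0)
      = (-1 : ℤ) ^ n * ∑ b ∈ range (n + 1), (if b + t ≤ n then (-1 : ℤ) ^ b * f b else 0) := by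
  rw [Finset.mul_sum, ← Finset.sum_range_reflect]
  refine Finset.sum_congr rfl (fun b hb => ?_)
  have hbn : b ≤ n := by simpa using Nat.lt_succ_iff.1 (Finset.mem_range.1 hb)
  have hnn : n + 1 - 1 - b = n - b := by omega
  rw [hnn]
  by_cases hc : b + t ≤ n
  · rw [if_pos (by omega), if_pos hc]
    have : n - (n - b) = b := by omega
    rw [this, neg_one_pow_sub hbn]
    ring
  · rw [if_neg (by omega), if_neg hc, mul_zero]

lemma sum_if_le' (f : ℕ → ℤ) (n t : ℕ) (h : t ≤ n) :
    ∑ b ∈ range (n + 1), (if b + t ≤ n then f b else 0) = ∑ b ∈ range (n - t + 1), f b := by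
  rw [← Finset.sum_filter]
  refine Finset.sum_congr ?_ (fun _ _ => rfl)
  ext a
  simp only [Finset.mem_filter, Finset.mem_range]
  omega

lemma sum_if_gt (f : ℕ → ℤ) (n t : ℕ) (h : n < t) :
    ∑ b ∈ range (n + 1), (if b + t ≤ n then f b else 0) = 0 := by
  refine Finset.sum_eq_zero (fun b _ => if_neg (by omega))

/-! ### The auxiliary parity identities -/

lemma auxCD (n : ℕ) :
    (Even n → ∀ s, s ≤ n → Odd s → dA n s = 0) ∧
    (Odd n → ∀ m, Even m → m < n → Ssum n m = dA n (m + 1)) := by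
  induction n with
  | zero =>
    constructor
    · intro _ s hs hodd
      interval_cases s
      exact absurd hodd (by decide)
    · intro h
      exact absurd h (by decide)
  | succ n ih =>
    obtain ⟨ih3, ih4⟩ := ih
    have C5 : Odd n → ∀ s, Odd s → s ≤ n → Ssum n s = 0 := by
      intro hn s hs hsn
      have hs1 : Even (s - 1) := Nat.Odd.sub_odd hs odd_one
      have hone : 1 ≤ s := hs.pos
      have h4 := ih4 hn (s - 1) hs1 (by omega)
      have hdec := Ssum_succ n (s - 1)
      rw [show s - 1 + 1 = s from by omega] at hdec h4
      rw [hdec, h4, hs.neg_one_pow]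
      ring
    constructor
    · -- C3 at n+1
      intro hev s hsle hsodd
      have hn : Odd n := Nat.Even.sub_odd (by omega) hev odd_one
      have hsn : s ≤ n := by
        rcases Nat.even_iff.1 hev with h1
        rcases Nat.odd_iff.1 hsodd with h2
        omega
      rw [dA_step', min_eq_left hsn]
      exact C5 hn s hsodd hsn
    · -- C4 at n+1
      intro hodd m hm hmlt
      have hn : Even n := Nat.Odd.sub_odd hodd odd_one
      have hmn : m ≤ n := by omega
      have Hlem : ∀ r, r ≤ n →
          (∑ a ∈ range (r + 1), (-1 : ℤ) ^ a * dA (n + 1) a)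
            = if Even r then Ssum n r else 0 := by
        intro r
        induction r with
        | zero =>
          intro _
          rw [Finset.sum_range_one, if_pos (by decide)]
          simp only [pow_zero, one_mul]
          rw [dA_step', min_eq_left (Nat.zero_le n)]
        | succ r ihr =>
          intro hrn
          rw [Finset.sum_range_succ, ihr (by omega)]
          have hda : dA (n + 1) (r + 1) = Ssum n (r + 1) := by
            rw [dA_step', min_eq_left hrn]
          rcases Nat.even_or_odd r with he | ho
          · have hro : Odd (r + 1) := Even.add_one he
            rw [if_pos he, if_neg (by rw [Nat.even_add_one]; exact fun h => h he)]
            rw [hda, Ssum_succ, hro.neg_one_pow]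
            have hz : dA n (r + 1) = 0 := ih3 hn (r + 1) hrn hro
            rw [hz]
            ring
          · have hre : Even (r + 1) := Odd.add_one ho
            rw [if_neg (by rw [Nat.not_even_iff_odd]; exact ho), if_pos hre]
            rw [hda, hre.neg_one_pow]
            ring
      have hL : Ssum (n + 1) m = Ssum n m := by
        have h := Hlem m hmn
        rw [show Ssum (n + 1) m = ∑ a ∈ range (m + 1), (-1 : ℤ) ^ a * dA (n + 1) a from rfl,
          h, if_pos hm]
      rw [hL, dA_step']
      rcases eq_or_lt_of_le hmn with rfl | hlt
      · rw [min_eq_right (by omega)]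
      · rw [min_eq_left (by omega), Ssum_succ]
        have hmo : Odd (m + 1) := Even.add_one hm
        rw [ih3 hn (m + 1) (by omega) hmo]
        ring
lemma C5lem (n : ℕ) (hn : Odd n) (s : ℕ) (hs : Odd s) (hsn : s ≤ n) : Ssum n s = 0 := by
  have hs1 : Even (s - 1) := Nat.Odd.sub_odd hs odd_one
  have hone : 1 ≤ s := hs.pos
  have h4 := (auxCD n).2 hn (s - 1) hs1 (by omega)
  have hdec := Ssum_succ n (s - 1)
  rw [show s - 1 + 1 = s from by omega] at hdec h4
  rw [hdec, h4, hs.neg_one_pow]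
  ring

lemma reflect_sum' (n t : ℕ) (f : ℕ → ℤ) :
    ∑ a ∈ range (n + 1), (if t ≤ a then f (n - a) else 0)
      = ∑ b ∈ range (n + 1), (if b + t ≤ n then f b else 0) := by
  rw [← Finset.sum_range_reflect]
  refine Finset.sum_congr rfl (fun b hb => ?_)
  have hbn : b ≤ n := by simpa using Nat.lt_succ_iff.1 (Finset.mem_range.1 hb)
  rw [show n + 1 - 1 - b = n - b from by omega]
  by_cases hc : b + t ≤ n
  · rw [if_pos (by omega), if_pos hc, show n - (n - b) = b from by omega]
  · rw [if_neg (by omega), if_neg hc]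

/-! ### Base case: length 0 -/

lemma avoids_len_zero (σ : Equiv.Perm (Fin 3)) (π : Equiv.Perm (Fin 0)) :
    Pattern.Avoids σ π := fun ⟨f, _, _⟩ => (f 0).elim0

instance : Subsingleton (Equiv.Perm (Fin 0)) := ⟨fun a b => Equiv.ext fun x => x.elim0⟩

lemma cA_zero_one (t : ℕ) : cA 0 t 1 = 1 := by
  haveI : Nonempty {σ : Equiv.Perm (Fin 0) //
      Equiv.Perm.sign σ = 1 ∧ Pattern.Avoids p132 σ ∧ IncAbove σ t} :=
    ⟨⟨1, by rw [map_one], avoids_len_zero _ _, fun i => i.elim0⟩⟩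
  exact Nat.card_unique

lemma cA_zero_neg (t : ℕ) : cA 0 t (-1) = 0 := by
  haveI : IsEmpty {σ : Equiv.Perm (Fin 0) //
      Equiv.Perm.sign σ = -1 ∧ Pattern.Avoids p132 σ ∧ IncAbove σ t} := by
    refine ⟨fun ⟨σ, h1, _⟩ => ?_⟩
    rw [Subsingleton.elim σ 1, map_one] at h1
    exact absurd h1 (by decide)
  exact Nat.card_of_isEmpty

lemma cB_zero_one (t : ℕ) : cB 0 t 1 = 1 := by
  haveI : Nonempty {σ : Equiv.Perm (Fin 0) //
      Equiv.Perm.sign σ = 1 ∧ Pattern.Avoids p321 σ ∧ IncBelow σ t} :=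
    ⟨⟨1, by rw [map_one], avoids_len_zero _ _, fun i => i.elim0⟩⟩
  exact Nat.card_unique

lemma cB_zero_neg (t : ℕ) : cB 0 t (-1) = 0 := by
  haveI : IsEmpty {σ : Equiv.Perm (Fin 0) //
      Equiv.Perm.sign σ = -1 ∧ Pattern.Avoids p321 σ ∧ IncBelow σ t} := by
    refine ⟨fun ⟨σ, h1, _⟩ => ?_⟩
    rw [Subsingleton.elim σ 1, map_one] at h1
    exact absurd h1 (by decide)
  exact Nat.card_of_isEmpty

/-! ### The key induction -/

lemma mainC : ∀ n t, t ≤ n → dB n t = dA n (n - t) ∧ sB n t = sA n (n - t) := by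
  intro n
  induction n with
  | zero =>
    intro t ht
    have ht0 : t = 0 := by omega
    subst ht0
    constructor
    · unfold dB dA
      rw [cA_zero_one, cA_zero_neg, cB_zero_one, cB_zero_neg]
    · unfold sB sA
      rw [cA_zero_one, cA_zero_neg, cB_zero_one, cB_zero_neg]
  | succ n ihn =>
    intro t ht
    have ih3 := (auxCD n).1
    have ih4 := (auxCD n).2
    have hsum1 : (∑ a ∈ range (n + 1), (if t ≤ a then (-1 : ℤ) ^ a * dB n a else 0))
        = ∑ a ∈ range (n + 1), (if t ≤ a then (-1 : ℤ) ^ a * dA n (n - a) else 0) := by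
      refine Finset.sum_congr rfl (fun a ha => ?_)
      have han : a ≤ n := by simpa using Nat.lt_succ_iff.1 (Finset.mem_range.1 ha)
      rw [(ihn a han).1]
    have hsum2 : (∑ a ∈ range (n + 1), (if t ≤ a then sB n a else 0))
        = ∑ a ∈ range (n + 1), (if t ≤ a then sA n (n - a) else 0) := by
      refine Finset.sum_congr rfl (fun a ha => ?_)
      have han : a ≤ n := by simpa using Nat.lt_succ_iff.1 (Finset.mem_range.1 ha)
      rw [(ihn a han).2]
    have hup1 : (if 1 ≤ t then dB n (t - 1) else 0) = if 1 ≤ t then dA n (n - (t - 1)) else 0 := by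
      split_ifs with h
      · exact (ihn (t - 1) (by omega)).1
      · rfl
    have hup2 : (if 1 ≤ t then sB n (t - 1) else 0) = if 1 ≤ t then sA n (n - (t - 1)) else 0 := by
      split_ifs with h
      · exact (ihn (t - 1) (by omega)).2
      · rfl
    constructor
    · rw [dB_step, hsum1, hup1, reflect_sum, dA_step']
      rcases Nat.eq_zero_or_pos t with rfl | ht1
      · rw [if_neg (by omega), add_zero, min_eq_right (by omega), sum_if_le' _ n 0 (by omega)]
        rw [show (∑ b ∈ range (n - 0 + 1), (-1 : ℤ) ^ b * dA n b) = Ssum n n from rfl]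
        rcases Nat.even_or_odd n with hne | hno
        · rw [hne.neg_one_pow, one_mul]
        · rw [hno.neg_one_pow, C5lem n hno n hno le_rfl]
          ring
      · rw [if_pos (show 1 ≤ t by omega)]
        rcases le_or_gt t n with htn2 | htn2
        · rw [sum_if_le' _ n t htn2]
          rw [show (∑ b ∈ range (n - t + 1), (-1 : ℤ) ^ b * dA n b) = Ssum n (n - t) from rfl]
          rw [show n - (t - 1) = (n - t) + 1 from by omega,
            show min (n + 1 - t) n = (n - t) + 1 from by omega]
          rw [Ssum_succ]
          rcases Nat.even_or_odd n with hne | hno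
          · rw [hne.neg_one_pow, one_mul]
            rcases Nat.even_or_odd (n - t + 1) with hM | hM
            · rw [hM.neg_one_pow]; ring
            · rw [ih3 hne (n - t + 1) (by omega) hM, hM.neg_one_pow]; ring
          · rw [hno.neg_one_pow]
            rcases Nat.even_or_odd (n - t + 1) with hM | hM
            · rw [C5lem n hno (n - t) (Nat.odd_iff.2 (by have := Nat.even_iff.1 hM; omega)) (by omega),
                hM.neg_one_pow]
              ring
            · rw [ih4 hno (n - t) (Nat.even_iff.2 (by have := Nat.odd_iff.1 hM; omega)) (by omega), hM.neg_one_pow]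
              ring
        · have ht2 : t = n + 1 := by omega
          subst ht2
          rw [sum_if_gt _ n (n + 1) (by omega), mul_zero, zero_add]
          rw [show n - (n + 1 - 1) = 0 from by omega,
            show min (n + 1 - (n + 1)) n = 0 from by omega, Ssum_zero]
    · rw [sB_step, hsum2, hup2, reflect_sum', sA_step']
      rcases Nat.eq_zero_or_pos t with rfl | ht1
      · rw [if_neg (by omega), add_zero, min_eq_right (by omega), sum_if_le' _ n 0 (by omega)]
        rw [show (∑ b ∈ range (n - 0 + 1), sA n b) = Tsum n n from rfl]
      · rw [if_pos (show 1 ≤ t by omega)]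
        rcases le_or_gt t n with htn2 | htn2
        · rw [sum_if_le' _ n t htn2]
          rw [show (∑ b ∈ range (n - t + 1), sA n b) = Tsum n (n - t) from rfl]
          rw [show n - (t - 1) = (n - t) + 1 from by omega,
            show min (n + 1 - t) n = (n - t) + 1 from by omega]
          rw [Tsum_succ]
        · have ht2 : t = n + 1 := by omega
          subst ht2
          rw [sum_if_gt _ n (n + 1) (by omega), zero_add]
          rw [show n - (n + 1 - 1) = 0 from by omega,
            show min (n + 1 - (n + 1)) n = 0 from by omega, Tsum_zero]
/-! ### Conclusion for 321 vs 132 -/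

lemma eav321_eq (n : ℕ) : eav n p321 = cB n 0 1 := by
  unfold eav cB
  apply Nat.card_congr
  apply Equiv.subtypeEquivRight
  intro π
  exact ⟨fun ⟨h1, h2⟩ => ⟨h1, h2, incBelow_zero π⟩, fun ⟨h1, h2, _⟩ => ⟨h1, h2⟩⟩

lemma eav132_eq (n : ℕ) : eav n p132 = cA n n 1 := by
  unfold eav cA
  apply Nat.card_congr
  apply Equiv.subtypeEquivRight
  intro π
  exact ⟨fun ⟨h1, h2⟩ => ⟨h1, h2, incAbove_trivial π le_rfl⟩, fun ⟨h1, h2, _⟩ => ⟨h1, h2⟩⟩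

lemma e321_132 (n : ℕ) : eav n p321 = eav n p132 := by
  rw [eav321_eq, eav132_eq]
  have h1 := (mainC n 0 (Nat.zero_le n)).1
  have h2 := (mainC n 0 (Nat.zero_le n)).2
  rw [Nat.sub_zero] at h1 h2
  unfold dB dA at h1
  unfold sB sA at h2
  omega

/-! ### Reverse-complement symmetry between 213 and 132 -/

def rc {m : ℕ} (π : Equiv.Perm (Fin m)) : Equiv.Perm (Fin m) :=
  Fin.revPerm * π * Fin.revPerm

lemma rc_apply {m : ℕ} (π : Equiv.Perm (Fin m)) (x : Fin m) :
    rc π x = (π x.rev).rev := by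
  simp [rc, Equiv.Perm.mul_apply]

lemma rc_rc {m : ℕ} (π : Equiv.Perm (Fin m)) : rc (rc π) = π := by
  have rr : (Fin.revPerm : Equiv.Perm (Fin m)) * Fin.revPerm = 1 := by
    ext x
    simp [Equiv.Perm.mul_apply, Fin.rev_rev]
  unfold rc
  rw [show Fin.revPerm * (Fin.revPerm * π * Fin.revPerm) * Fin.revPerm
      = (Fin.revPerm * Fin.revPerm) * π * (Fin.revPerm * Fin.revPerm) from by group]
  rw [rr, one_mul, mul_one]

lemma sign_rc {m : ℕ} (π : Equiv.Perm (Fin m)) :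
    Equiv.Perm.sign (rc π) = Equiv.Perm.sign π := by
  unfold rc
  rw [map_mul, map_mul, mul_right_comm, Int.units_mul_self, one_mul]

lemma contains_rc {k m : ℕ} (σ : Equiv.Perm (Fin k)) (π : Equiv.Perm (Fin m)) :
    Pattern.Contains σ π → Pattern.Contains (rc σ) (rc π) := by
  rintro ⟨f, hf, hiff⟩
  refine ⟨fun x => (f x.rev).rev, fun a b hab => ?_, fun a b => ?_⟩
  · exact Fin.rev_lt_rev.2 (hf (Fin.rev_lt_rev.2 hab))
  · rw [rc_apply, rc_apply, rc_apply, rc_apply, Fin.rev_rev, Fin.rev_rev,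
      Fin.rev_lt_rev, Fin.rev_lt_rev]
    exact hiff _ _

lemma avoids_rc_iff {k m : ℕ} (σ : Equiv.Perm (Fin k)) (π : Equiv.Perm (Fin m)) :
    Pattern.Avoids σ π ↔ Pattern.Avoids (rc σ) (rc π) := by
  constructor
  · intro h hc
    apply h
    have := contains_rc (rc σ) (rc π) hc
    rwa [rc_rc, rc_rc] at this
  · intro h hc
    exact h (contains_rc σ π hc)

lemma rc_p213 : rc p213 = p132 := by
  apply Equiv.ext
  decide

lemma e213_132 (n : ℕ) : eav n p213 = eav n p132 := by
  unfold eav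
  apply Nat.card_congr
  refine Equiv.subtypeEquiv ⟨rc, rc, rc_rc, rc_rc⟩ (fun π => ?_)
  simp only [Equiv.coe_fn_mk]
  have hsgn : Equiv.Perm.sign (rc π) = Equiv.Perm.sign π := sign_rc π
  have hav : Pattern.Avoids p132 (rc π) ↔ Pattern.Avoids p213 π := by
    rw [← rc_p213]
    exact (avoids_rc_iff _ _).symm
  constructor
  · rintro ⟨h1, h2⟩
    exact ⟨by rw [hsgn]; exact h1, hav.2 h2⟩
  · rintro ⟨h1, h2⟩
    exact ⟨by rw [hsgn] at h1; exact h1, hav.1 h2⟩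

/-- The patterns 321, 213, 132 are pairwise even-Wilf-equivalent. -/
theorem stmt8 :
    (∀ n : ℕ, eav n p321 = eav n p213) ∧
      (∀ n : ℕ, eav n p321 = eav n p132) ∧
      (∀ n : ℕ, eav n p213 = eav n p132) := by
  refine ⟨fun n => ?_, fun n => e321_132 n, fun n => e213_132 n⟩
  rw [e321_132 n, e213_132 n]
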